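/- Let G be a p-group of maximal class of order p^n with p+2 ≤ n ≤ 2p-1, p ≥ 5, and suppose G is p²-exceptional (exactly one z-class of uniform elements has elements of order p², the rest order p). Then G is of (p,p,p)-type: there exist x, y ∈ G with |x| = |y| = |xy| = p and G = ⟨x, y⟩. -/

import Mathlib

open scoped Pointwise

open scoped commutatorElement

open Subgroup

/-- If the lower central series stabilizes at step `i`, it is constant afterwards. -/
private lemma lcs_stable {G : Type*} [Group G] {i : ℕ}
    (h : (⊤ : Subgroup G).lowerCentralSeries (i + 1) = (⊤ : Subgroup G).lowerCentralSeries i) (k : ℕ) :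
    (⊤ : Subgroup G).lowerCentralSeries (i + k) = (⊤ : Subgroup G).lowerCentralSeries i := by
  induction k with
  | zero => rfl
  | succ k ih =>
    calc (⊤ : Subgroup G).lowerCentralSeries (i + (k + 1)) = ⁅(⊤ : Subgroup G).lowerCentralSeries (i + k), ⊤⁆ := rfl
    _ = ⁅(⊤ : Subgroup G).lowerCentralSeries i, ⊤⁆ := by rw [ih]
    _ = (⊤ : Subgroup G).lowerCentralSeries (i + 1) := rfl
    _ = (⊤ : Subgroup G).lowerCentralSeries i := h

/-- If `G` modulo its commutator subgroup is generated by one element, then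
the commutator subgroup equals the next term of the lower central series. -/
private lemma comm_le_of_gen {G : Type*} [Group G] (x : G)
    (hx : ∀ g : G, ∃ (k : ℤ) (c : G), c ∈ (⊤ : Subgroup G).lowerCentralSeries 1 ∧ g = x ^ k * c) :
    (⊤ : Subgroup G).lowerCentralSeries 1 ≤ (⊤ : Subgroup G).lowerCentralSeries 2 := by
  have h1 : (⊤ : Subgroup G).lowerCentralSeries 1 = ⁅(⊤ : Subgroup G), ⊤⁆ := rfl
  rw [h1, Subgroup.commutator_le]
  intro a _ b _
  set π := QuotientGroup.mk' ((⊤ : Subgroup G).lowerCentralSeries 2) with hπ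
  have hker : ∀ y : G, π y = 1 ↔ y ∈ (⊤ : Subgroup G).lowerCentralSeries 2 := fun y =>
    QuotientGroup.eq_one_iff y
  have hcentral : ∀ c ∈ (⊤ : Subgroup G).lowerCentralSeries 1, ∀ q : G, Commute (π c) (π q) := by
    intro c hc q
    have hmem : ⁅c, q⁆ ∈ (⊤ : Subgroup G).lowerCentralSeries 2 :=
      Subgroup.commutator_mem_commutator hc (Subgroup.mem_top q)
    have h2 : π ⁅c, q⁆ = 1 := (hker _).mpr hmem
    rw [map_commutatorElement] at h2
    exact commutatorElement_eq_one_iff_commute.mp h2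
  obtain ⟨i, c, hc, rfl⟩ := hx a
  obtain ⟨j, d, hd, rfl⟩ := hx b
  rw [← hker, map_commutatorElement]
  apply commutatorElement_eq_one_iff_commute.mpr
  rw [map_mul, map_mul]
  have hxx : Commute (π (x ^ i)) (π (x ^ j)) := by
    rw [map_zpow, map_zpow]
    exact (Commute.refl (π x)).zpow_zpow i j
  exact Commute.mul_left (Commute.mul_right hxx ((hcentral d hd _).symm))
    (Commute.mul_right (hcentral c hc _) (hcentral c hc _))

/-- `⁅γ₂, γ₂⁆ ≤ γ₄` (indices shifted by one), via the three subgroups lemma in `G ⧸ γ₄`. -/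
private lemma comm_comm_le_three {G : Type*} [Group G] :
    ⁅(⊤ : Subgroup G).lowerCentralSeries 1, (⊤ : Subgroup G).lowerCentralSeries 1⁆ ≤ (⊤ : Subgroup G).lowerCentralSeries 3 := by
  set π := QuotientGroup.mk' ((⊤ : Subgroup G).lowerCentralSeries 3) with hπ
  have hsurj : Function.Surjective π := QuotientGroup.mk'_surjective _
  set K := ((⊤ : Subgroup G).lowerCentralSeries 1).map π with hK
  have hKtop : K = ⁅(⊤ : Subgroup (G ⧸ (⊤ : Subgroup G).lowerCentralSeries 3)), ⊤⁆ := by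
    have h0 : (⊤ : Subgroup G).lowerCentralSeries 1 = ⁅(⊤ : Subgroup G), ⊤⁆ := rfl
    rw [hK, h0, Subgroup.map_commutator, Subgroup.map_top_of_surjective _ hsurj]
  have hrot : ⁅⁅(⊤ : Subgroup (G ⧸ (⊤ : Subgroup G).lowerCentralSeries 3)), K⁆, (⊤ : Subgroup (G ⧸ (⊤ : Subgroup G).lowerCentralSeries 3))⁆ = ⊥ := by
    rw [Subgroup.commutator_comm (⊤ : Subgroup _) K, hK]
    have h1 : ⁅((⊤ : Subgroup G).lowerCentralSeries 1).map π, (⊤ : Subgroup _)⁆ =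
        ((⊤ : Subgroup G).lowerCentralSeries 2).map π := by
      rw [← Subgroup.map_top_of_surjective π hsurj, ← Subgroup.map_commutator]; rfl
    have h2 : ⁅((⊤ : Subgroup G).lowerCentralSeries 2).map π, (⊤ : Subgroup _)⁆ =
        ((⊤ : Subgroup G).lowerCentralSeries 3).map π := by
      rw [← Subgroup.map_top_of_surjective π hsurj, ← Subgroup.map_commutator]; rfl
    rw [h1, h2, Subgroup.map_eq_bot_iff, hπ, QuotientGroup.ker_mk']
  have h3 : ⁅K, K⁆ = ⊥ := by
    have := Subgroup.commutator_commutator_eq_bot_of_rotate hrot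
      (by rwa [Subgroup.commutator_comm K (⊤ : Subgroup _)])
    rwa [← hKtop] at this
  rw [Subgroup.commutator_le]
  intro g hg x hx
  have : π ⁅g, x⁆ ∈ ⁅K, K⁆ := by
    rw [map_commutatorElement]
    exact Subgroup.commutator_mem_commutator (Subgroup.mem_map_of_mem π hg)
      (Subgroup.mem_map_of_mem π hx)
  rw [h3, Subgroup.mem_bot] at this
  have := (QuotientGroup.eq_one_iff _).mp this
  exact this

/-- Two subgroups of a finite group with `H ≤ K` and `|K| ≤ |H|` are equal. -/
private lemma sub_eq_of_le_card {G : Type*} [Group G] [Finite G] {H K : Subgroup G}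
    (hle : H ≤ K) (hcard : Nat.card K ≤ Nat.card H) : H = K := by
  apply SetLike.coe_injective
  refine Set.eq_of_subset_of_ncard_le hle ?_ (Set.toFinite _)
  rwa [← Nat.card_coe_set_eq, ← Nat.card_coe_set_eq]

/-- Let `p ≥ 5` and `G` a `p`-group of maximal class of order `p^n` with
`p+2 ≤ n ≤ 2p-1`.  If `G` is `p²`-exceptional (the uniform elements `G \ G₁`
have orders `{p, p²}` and the order-`p²` ones form a single `z`-class), then
`G` is of `(p,p,p)`-type: there exist `x, y` of order `p` with `xy` of order
`p` generating `G`. -/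
theorem stmt_15 {G : Type*} [Group G] [Finite G] (p n : ℕ) (hp : p.Prime)
    (hp5 : 5 ≤ p) (hn₁ : p + 2 ≤ n) (hn₂ : n ≤ 2 * p - 1)
    (hcard : Nat.card G = p ^ n)
    (hmax₁ : (⊤ : Subgroup G).lowerCentralSeries (n - 1) = ⊥)
    (hmax₂ : (⊤ : Subgroup G).lowerCentralSeries (n - 2) ≠ ⊥)
    (G₁ : Subgroup G)
    (hG₁ : ∀ g : G, g ∈ G₁ ↔ ∀ x ∈ (⊤ : Subgroup G).lowerCentralSeries 1, ⁅g, x⁆ ∈ (⊤ : Subgroup G).lowerCentralSeries 3)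
    (horders : ∀ u : G, u ∉ G₁ → orderOf u = p ∨ orderOf u = p ^ 2)
    (hex1 : ∃ u : G, u ∉ G₁ ∧ orderOf u = p)
    (hex2 : ∃ u : G, u ∉ G₁ ∧ orderOf u = p ^ 2)
    (hexc : ∀ u : G, u ∉ G₁ → ∀ v : G, v ∉ G₁ →
      orderOf u = p ^ 2 → orderOf v = p ^ 2 →
      ∃ g : G, (Subgroup.centralizer {u}).map (MulAut.conj g).toMonoidHom =
        Subgroup.centralizer {v}) :
    ∃ x y : G, orderOf x = p ∧ orderOf y = p ∧ orderOf (x * y) = p ∧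
      Subgroup.closure {x, y} = ⊤ := by
  classical
  haveI : Fact p.Prime := ⟨hp⟩
  obtain ⟨u, huG₁, hu⟩ := hex1
  obtain ⟨w, hwG₁, hw⟩ := hex2
  have hp1 : 1 < p := hp.one_lt
  have hn7 : 7 ≤ n := by omega
  -- every subgroup has p-power order
  have hcardH : ∀ H : Subgroup G, ∃ k, k ≤ n ∧ Nat.card H = p ^ k := by
    intro H
    have hdvd : Nat.card H ∣ p ^ n := hcard ▸ Subgroup.card_subgroup_dvd_card H
    exact (Nat.dvd_prime_pow hp).mp hdvd
  -- the lower central series is strictly decreasing up to n-1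
  have hstrict : ∀ i, i ≤ n - 2 → (⊤ : Subgroup G).lowerCentralSeries (i + 1) ≠ (⊤ : Subgroup G).lowerCentralSeries i := by
    intro i hi heq
    have hstab := lcs_stable heq (n - 1 - i)
    rw [show i + (n - 1 - i) = n - 1 by omega, hmax₁] at hstab
    apply hmax₂
    rw [eq_bot_iff, hstab]
    exact Subgroup.lowerCentralSeries_antitone ⊤ (by omega : i ≤ n - 2)
  -- G modulo commutator can not be generated by one element
  have hgenfree : ∀ x : G,
      (∀ g : G, ∃ (k : ℤ) (c : G), c ∈ (⊤ : Subgroup G).lowerCentralSeries 1 ∧ g = x ^ k * c) → False := by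
    intro x hx
    have h12 : (⊤ : Subgroup G).lowerCentralSeries (1 + 1) = (⊤ : Subgroup G).lowerCentralSeries 1 :=
      le_antisymm (Subgroup.lowerCentralSeries_antitone ⊤ (by omega)) (comm_le_of_gen x hx)
    exact hstrict 1 (by omega) h12
  -- chain divisibility
  have hchain : ∀ j, j ≤ n - 2 → p ^ j ∣ Nat.card ((⊤ : Subgroup G).lowerCentralSeries (n - 1 - j)) := by
    intro j
    induction j with
    | zero => intro _; simpa using one_dvd _
    | succ j ih =>
      intro hj
      have hij := ih (by omega)
      have hi1 : n - 1 - j = (n - 1 - (j + 1)) + 1 := by omega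
      set i := n - 1 - (j + 1) with hidef
      rw [hi1] at hij
      have hlt : (⊤ : Subgroup G).lowerCentralSeries (i + 1) ≠ (⊤ : Subgroup G).lowerCentralSeries i := hstrict i (by omega)
      have hle : (⊤ : Subgroup G).lowerCentralSeries (i + 1) ≤ (⊤ : Subgroup G).lowerCentralSeries i :=
        Subgroup.lowerCentralSeries_antitone ⊤ (by omega)
      obtain ⟨a, han, ha⟩ := hcardH ((⊤ : Subgroup G).lowerCentralSeries i)
      obtain ⟨b, hbn, hb⟩ := hcardH ((⊤ : Subgroup G).lowerCentralSeries (i + 1))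
      have hdvd : p ^ b ∣ p ^ a := by
        rw [← ha, ← hb]; exact Subgroup.card_dvd_of_le hle
      have hba : b ≤ a := (Nat.pow_dvd_pow_iff_le_right hp1).mp hdvd
      have hne : b ≠ a := by
        intro hba'
        exact hlt (sub_eq_of_le_card hle (by rw [ha, hb, hba']))
      have hjb : p ^ j ∣ p ^ b := by rw [← hb]; exact hij
      have hjb' : j ≤ b := (Nat.pow_dvd_pow_iff_le_right hp1).mp hjb
      rw [ha]
      exact pow_dvd_pow p (by omega)
  -- card of the commutator subgroup
  obtain ⟨k1, hk1n, hcL1⟩ := hcardH ((⊤ : Subgroup G).lowerCentralSeries 1)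
  have hk1ge : n - 2 ≤ k1 := by
    have h := hchain (n - 2) le_rfl
    rw [show n - 1 - (n - 2) = 1 by omega, hcL1] at h
    exact (Nat.pow_dvd_pow_iff_le_right hp1).mp h
  obtain ⟨m1, hm1n, hcQ⟩ : ∃ m, m ≤ n ∧ Nat.card (G ⧸ (⊤ : Subgroup G).lowerCentralSeries 1) = p ^ m := by
    have hdvd : Nat.card (G ⧸ (⊤ : Subgroup G).lowerCentralSeries 1) ∣ p ^ n :=
      hcard ▸ Subgroup.card_quotient_dvd_card _
    exact (Nat.dvd_prime_pow hp).mp hdvd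
  have hm1k1 : m1 + k1 = n := by
    have h1 : p ^ (m1 + k1) = p ^ n := by
      rw [pow_add, ← hcQ, ← hcL1,
        ← Subgroup.card_eq_card_quotient_mul_card_subgroup ((⊤ : Subgroup G).lowerCentralSeries 1), hcard]
    exact Nat.pow_right_injective (by omega) h1
  have hk1eq : k1 = n - 2 := by
    by_contra hkne
    have hm1le : m1 ≤ 1 := by omega
    have hexgen : ∃ x : G, ∀ g : G,
        ∃ (k : ℤ) (c : G), c ∈ (⊤ : Subgroup G).lowerCentralSeries 1 ∧ g = x ^ k * c := by
      rcases Nat.lt_or_ge m1 1 with hm0 | hm1'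
      · have hm0' : m1 = 0 := by omega
        have hq1 : Nat.card (G ⧸ (⊤ : Subgroup G).lowerCentralSeries 1) = 1 := by
          rw [hcQ, hm0', pow_zero]
        haveI hsub : Subsingleton (G ⧸ (⊤ : Subgroup G).lowerCentralSeries 1) :=
          (Nat.card_eq_one_iff_unique.mp hq1).1
        refine ⟨1, fun g => ⟨0, g, ?_, by simp⟩⟩
        have h1 : (QuotientGroup.mk' ((⊤ : Subgroup G).lowerCentralSeries 1)) g = 1 := Subsingleton.elim _ _
        exact (QuotientGroup.eq_one_iff g).mp h1
      · have hm1e : m1 = 1 := by omega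
        have hQp : Nat.card (G ⧸ (⊤ : Subgroup G).lowerCentralSeries 1) = p := by
          rw [hcQ, hm1e, pow_one]
        haveI : Nontrivial (G ⧸ (⊤ : Subgroup G).lowerCentralSeries 1) := by
          rw [← Finite.one_lt_card_iff_nontrivial, hQp]; omega
        obtain ⟨q, hq1⟩ := exists_ne (1 : G ⧸ (⊤ : Subgroup G).lowerCentralSeries 1)
        obtain ⟨x, hxq⟩ := QuotientGroup.mk'_surjective ((⊤ : Subgroup G).lowerCentralSeries 1) q
        have hord : orderOf q = p := by
          have hdvd : orderOf q ∣ p := hQp ▸ orderOf_dvd_natCard q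
          rcases (Nat.Prime.eq_one_or_self_of_dvd hp _ hdvd) with h | h
          · exact absurd (orderOf_eq_one_iff.mp h) hq1
          · exact h
        have htop : Subgroup.zpowers q = ⊤ := by
          apply Subgroup.eq_top_of_card_eq
          rw [Nat.card_zpowers, hord, hQp]
        refine ⟨x, fun g => ?_⟩
        have hmem : (QuotientGroup.mk' ((⊤ : Subgroup G).lowerCentralSeries 1)) g ∈ Subgroup.zpowers q :=
          htop ▸ Subgroup.mem_top _
        obtain ⟨k, hk⟩ := Subgroup.mem_zpowers_iff.mp hmem
        have heqq : (QuotientGroup.mk' ((⊤ : Subgroup G).lowerCentralSeries 1)) (x ^ k) =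
            (QuotientGroup.mk' ((⊤ : Subgroup G).lowerCentralSeries 1)) g := by
          rw [map_zpow, hxq, hk]
        obtain ⟨z, hz, hxz⟩ := (QuotientGroup.mk'_eq_mk' _).mp heqq
        exact ⟨k, z, hz, hxz.symm⟩
    obtain ⟨x, hx⟩ := hexgen
    exact hgenfree x hx
  have hcL1' : Nat.card ((⊤ : Subgroup G).lowerCentralSeries 1) = p ^ (n - 2) := by rw [hcL1, hk1eq]
  -- commutator subgroup is inside G₁
  have hL1G₁ : (⊤ : Subgroup G).lowerCentralSeries 1 ≤ G₁ := by
    intro g hg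
    rw [hG₁]
    intro x hx
    exact comm_comm_le_three (Subgroup.commutator_mem_commutator hg hx)
  have huL1 : u ∉ (⊤ : Subgroup G).lowerCentralSeries 1 := fun h => huG₁ (hL1G₁ h)
  -- the subgroup U
  set U := Subgroup.zpowers u ⊔ (⊤ : Subgroup G).lowerCentralSeries 1 with hUdef
  have hUtop : U ≠ ⊤ := by
    intro htop
    apply hgenfree u
    intro g
    have hg : g ∈ ((Subgroup.zpowers u : Set G) * ((⊤ : Subgroup G).lowerCentralSeries 1 : Set G)) := by
      rw [← Subgroup.mul_normal]
      rw [← hUdef, htop]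
      trivial
    obtain ⟨a, ha, b, hb, hab⟩ := hg
    obtain ⟨k, hk⟩ := Subgroup.mem_zpowers_iff.mp ha
    exact ⟨k, b, hb, by rw [← hab, hk]⟩
  obtain ⟨kU, hkUn, hcU⟩ := hcardH U
  have hkUle : kU ≤ n - 1 := by
    by_contra hh
    exact hUtop (Subgroup.eq_top_of_card_eq _ (by rw [hcU, (by omega : kU = n), hcard]))
  have hUge : p ^ (n - 1) ≤ Nat.card U := by
    have hleU : (⊤ : Subgroup G).lowerCentralSeries 1 ≤ U := le_sup_right
    have hdvd : p ^ (n - 2) ∣ p ^ kU := by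
      rw [← hcU, ← hcL1']; exact Subgroup.card_dvd_of_le hleU
    have h2 : n - 2 ≤ kU := (Nat.pow_dvd_pow_iff_le_right hp1).mp hdvd
    have hne2 : kU ≠ n - 2 := by
      intro he
      have heq : (⊤ : Subgroup G).lowerCentralSeries 1 = U :=
        sub_eq_of_le_card hleU (by rw [hcU, hcL1', he])
      have hu' : u ∈ U := Subgroup.mem_sup_left (Subgroup.mem_zpowers u)
      rw [← heq] at hu'
      exact huL1 hu'
    rw [hcU]
    exact Nat.pow_le_pow_right (by omega) (by omega)
  -- nilpotency and the normalizer condition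
  have hpG : IsPGroup p G := IsPGroup.of_card hcard
  haveI : Group.IsNilpotent G := hpG.isNilpotent
  have hnc : NormalizerCondition G := normalizerCondition_of_isNilpotent
  -- generation criterion
  have hgen2 : ∀ v : G, v ∉ U → Subgroup.closure {u, v} = ⊤ := by
    intro v hvU
    by_contra hne
    obtain ⟨M, hM, hleM⟩ :=
      (eq_top_or_exists_le_coatom (Subgroup.closure {u, v})).resolve_left hne
    haveI hMnormal : M.Normal := Subgroup.NormalizerCondition.normal_of_coatom M hnc hM
    have hcomm : (⊤ : Subgroup G).lowerCentralSeries 1 ≤ M := by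
      have h0 : (⊤ : Subgroup G).lowerCentralSeries 1 = ⁅(⊤ : Subgroup G), ⊤⁆ := rfl
      rw [h0, Subgroup.commutator_le]
      intro a _ b _
      have hdich : ∀ q r : G ⧸ M, Commute q r := by
        intro q r
        rcases eq_or_ne q 1 with h | h
        · rw [h]; exact Commute.one_left r
        · have hz : Subgroup.zpowers q = ⊤ := by
            by_contra hzt
            have hcm : M ≤ Subgroup.comap (QuotientGroup.mk' M) (Subgroup.zpowers q) := by
              intro x hx
              rw [Subgroup.mem_comap]
              have h1 : (QuotientGroup.mk' M) x = 1 := (QuotientGroup.eq_one_iff x).mpr hx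
              rw [h1]; exact one_mem _
            rcases lt_or_eq_of_le hcm with hlt | heq
            · apply hzt
              have h2 := hM.2 _ hlt
              have h3 := congrArg (Subgroup.map (QuotientGroup.mk' M)) h2
              rwa [Subgroup.map_comap_eq_self_of_surjective
                  (QuotientGroup.mk'_surjective M),
                Subgroup.map_top_of_surjective _ (QuotientGroup.mk'_surjective M)] at h3
            · have h3 := congrArg (Subgroup.map (QuotientGroup.mk' M)) heq
              rw [Subgroup.map_comap_eq_self_of_surjective
                (QuotientGroup.mk'_surjective M)] at h3
              have hbot : Subgroup.map (QuotientGroup.mk' M) M = ⊥ := by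
                rw [Subgroup.map_eq_bot_iff, QuotientGroup.ker_mk']
              rw [hbot] at h3
              have h4 : q ∈ (⊥ : Subgroup (G ⧸ M)) := h3 ▸ Subgroup.mem_zpowers q
              exact h (Subgroup.mem_bot.mp h4)
          have hrq : r ∈ Subgroup.zpowers q := hz ▸ Subgroup.mem_top r
          obtain ⟨k, hk⟩ := Subgroup.mem_zpowers_iff.mp hrq
          rw [← hk]
          exact Commute.zpow_right (Commute.refl q) k
      have h5 : (QuotientGroup.mk' M) ⁅a, b⁆ = 1 := by
        rw [map_commutatorElement]
        exact commutatorElement_eq_one_iff_commute.mpr (hdich _ _)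
      exact (QuotientGroup.eq_one_iff _).mp h5
    have hUM : U ≤ M := by
      rw [hUdef]
      refine sup_le ?_ hcomm
      rw [Subgroup.zpowers_le]
      exact hleM (Subgroup.subset_closure (by simp))
    obtain ⟨kM, hkMn, hcM⟩ := hcardH M
    have hkM : kM ≤ n - 1 := by
      by_contra hh
      exact hM.1 (Subgroup.eq_top_of_card_eq _ (by rw [hcM, (by omega : kM = n), hcard]))
    have hMU : U = M := sub_eq_of_le_card hUM (by
      rw [hcM]
      exact le_trans (Nat.pow_le_pow_right (by omega) hkM) hUge)
    apply hvU
    rw [hMU]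
    exact hleM (Subgroup.subset_closure (by simp))
  -- the centralizer of w
  set C := Subgroup.centralizer {w} with hCdef
  have hCtop : C ≠ ⊤ := by
    intro htop
    apply hwG₁
    rw [hG₁]
    intro x hx
    have hxC : x ∈ C := htop ▸ Subgroup.mem_top x
    have hcm : Commute w x := Subgroup.mem_centralizer_iff.mp hxC w rfl
    rw [commutatorElement_eq_one_iff_commute.mpr hcm]
    exact one_mem _
  set N := Subgroup.normalizer (C : Set G) with hNdef
  have hCN : C < N := hnc C (lt_top_iff_ne_top.mpr hCtop)
  obtain ⟨kC, hkCn, hcC⟩ := hcardH C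
  obtain ⟨kN, hkNn, hcN⟩ := hcardH N
  have hkCN : kC < kN := by
    have hdvd : p ^ kC ∣ p ^ kN := by
      rw [← hcC, ← hcN]; exact Subgroup.card_dvd_of_le hCN.le
    have hle := (Nat.pow_dvd_pow_iff_le_right hp1).mp hdvd
    rcases lt_or_eq_of_le hle with h | h
    · exact h
    · exact absurd (sub_eq_of_le_card hCN.le (le_of_eq (by rw [hcC, hcN, h]))) hCN.ne
  set t := Nat.card (G ⧸ N) with htdef
  have htm : t * p ^ kC ≤ p ^ (n - 1) := by
    have h1 : t * p ^ kN = p ^ n := by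
      rw [← hcN, htdef, ← Subgroup.card_eq_card_quotient_mul_card_subgroup N, hcard]
    have h2 : t * (p ^ kC * p) ≤ t * p ^ kN := by
      apply Nat.mul_le_mul_left
      calc p ^ kC * p = p ^ (kC + 1) := (pow_succ p kC).symm
      _ ≤ p ^ kN := Nat.pow_le_pow_right (by omega) (by omega)
    rw [h1] at h2
    have h3 : t * p ^ kC * p ≤ p ^ (n - 1) * p := by
      calc t * p ^ kC * p = t * (p ^ kC * p) := by ring
      _ ≤ p ^ n := h2
      _ = p ^ (n - 1) * p := by rw [← pow_succ, (by omega : n - 1 + 1 = n)]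
    exact Nat.le_of_mul_le_mul_right h3 (by omega)
  have ht1 : 1 ≤ t := Nat.card_pos
  -- the set S of uniform elements of order p²
  set S : Set G := {g : G | g ∉ G₁ ∧ orderOf g = p ^ 2} with hSdef
  have hScover : S ⊆ (fun qc : (G ⧸ N) × G => qc.1.out * qc.2 * qc.1.out⁻¹) ''
      ((Set.univ : Set (G ⧸ N)) ×ˢ ((C : Set G) \ {1})) := by
    intro v hv
    obtain ⟨g, hg⟩ := hexc w hwG₁ v hv.1 hw hv.2
    have hvmem : v ∈ Subgroup.centralizer {v} :=
      Subgroup.mem_centralizer_iff.mpr (fun h hh => by rw [Set.mem_singleton_iff] at hh; rw [hh])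
    rw [← hg] at hvmem
    obtain ⟨c, hcC, hc⟩ := hvmem
    have hc' : g * c * g⁻¹ = v := hc
    have hcne : c ≠ 1 := by
      intro h1
      rw [h1] at hc'
      simp only [mul_one, mul_inv_cancel] at hc'
      have hvo := hv.2
      rw [← hc', orderOf_one] at hvo
      have : p ^ 2 ≠ 1 := Nat.ne_of_gt (Nat.one_lt_pow (by omega) hp1)
      exact this hvo.symm
    set q : G ⧸ N := QuotientGroup.mk g with hq
    have houtg : (q.out)⁻¹ * g ∈ N := by
      have h1 : (QuotientGroup.mk q.out : G ⧸ N) = QuotientGroup.mk g := by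
        rw [QuotientGroup.out_eq']
      exact QuotientGroup.eq.mp h1
    set h := (q.out)⁻¹ * g with hhdef
    have hc2 : h * c * h⁻¹ ∈ C := ((Subgroup.mem_normalizer_iff.mp houtg) c).mp hcC
    refine ⟨(q, h * c * h⁻¹), ?_, ?_⟩
    · rw [Set.mem_prod]
      refine ⟨Set.mem_univ _, hc2, ?_⟩
      simp only [Set.mem_singleton_iff]
      intro h1
      apply hcne
      have := congrArg (fun z => h⁻¹ * z * h) h1
      simpa [mul_assoc] using this
    · show q.out * (h * c * h⁻¹) * q.out⁻¹ = v
      have hgh : q.out * h = g := by rw [hhdef]; group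
      calc q.out * (h * c * h⁻¹) * q.out⁻¹ = (q.out * h) * c * (q.out * h)⁻¹ := by group
      _ = g * c * g⁻¹ := by rw [hgh]
      _ = v := hc'
  have hScard : S.ncard ≤ p ^ (n - 1) - 1 := by
    have h1 : S.ncard ≤ ((Set.univ : Set (G ⧸ N)) ×ˢ ((C : Set G) \ {1})).ncard :=
      le_trans (Set.ncard_le_ncard hScover (Set.toFinite _)) (Set.ncard_image_le (Set.toFinite _))
    have h2 : ((Set.univ : Set (G ⧸ N)) ×ˢ ((C : Set G) \ {1})).ncard =
        t * ((C : Set G) \ {1}).ncard := by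
      rw [← Nat.card_coe_set_eq, ← Nat.card_coe_set_eq,
        Nat.card_congr (Equiv.Set.prod _ _), Nat.card_prod, Nat.card_coe_set_eq,
        Set.ncard_univ]
    have h3 : ((C : Set G) \ {1}).ncard = p ^ kC - 1 := by
      rw [Set.ncard_diff_singleton_of_mem (by exact one_mem C)]
      rw [← Nat.card_coe_set_eq, SetLike.coe_sort_coe, hcC]
    rw [h2, h3] at h1
    calc S.ncard ≤ t * (p ^ kC - 1) := h1
    _ = t * p ^ kC - t := by rw [Nat.mul_sub, mul_one]
    _ ≤ p ^ (n - 1) - 1 := by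
        have hA : 1 ≤ p ^ kC := Nat.one_le_pow _ _ (by omega)
        have htA : t ≤ t * p ^ kC := Nat.le_mul_of_pos_right t (by omega)
        omega
  -- the card of G₁
  obtain ⟨kg, hkgn, hcG₁⟩ := hcardH G₁
  have hkgle : kg ≤ n - 1 := by
    by_contra hh
    have : G₁ = ⊤ := Subgroup.eq_top_of_card_eq _ (by rw [hcG₁, (by omega : kg = n), hcard])
    exact huG₁ (this ▸ Subgroup.mem_top u)
  -- the bad set
  set B : Set G := (G₁ : Set G) ∪ (U : Set G) ∪ ((u⁻¹ * ·) '' (G₁ : Set G)) ∪ S ∪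
      ((u⁻¹ * ·) '' S) with hBdef
  have hP1 : 1 ≤ p ^ (n - 1) := Nat.one_le_pow _ _ (by omega)
  have h5P : 5 * p ^ (n - 1) ≤ p ^ n := by
    calc 5 * p ^ (n - 1) ≤ p * p ^ (n - 1) := Nat.mul_le_mul_right _ hp5
    _ = p ^ n := by rw [← pow_succ', (by omega : n - 1 + 1 = n)]
  have hG₁le : (G₁ : Set G).ncard ≤ p ^ (n - 1) := by
    rw [← Nat.card_coe_set_eq, SetLike.coe_sort_coe, hcG₁]
    exact Nat.pow_le_pow_right (by omega) hkgle
  have hUle : (U : Set G).ncard ≤ p ^ (n - 1) := by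
    rw [← Nat.card_coe_set_eq, SetLike.coe_sort_coe, hcU]
    exact Nat.pow_le_pow_right (by omega) hkUle
  have hBcard : B.ncard < p ^ n := by
    have hb1 : B.ncard ≤ (G₁ : Set G).ncard + (U : Set G).ncard +
        ((u⁻¹ * ·) '' (G₁ : Set G)).ncard + S.ncard + ((u⁻¹ * ·) '' S).ncard := by
      calc B.ncard ≤ ((G₁ : Set G) ∪ (U : Set G) ∪ ((u⁻¹ * ·) '' (G₁ : Set G)) ∪ S).ncard +
            ((u⁻¹ * ·) '' S).ncard := Set.ncard_union_le _ _
      _ ≤ ((G₁ : Set G) ∪ (U : Set G) ∪ ((u⁻¹ * ·) '' (G₁ : Set G))).ncard + S.ncard +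
            ((u⁻¹ * ·) '' S).ncard := by
            exact Nat.add_le_add_right (Set.ncard_union_le _ _) _
      _ ≤ ((G₁ : Set G) ∪ (U : Set G)).ncard + ((u⁻¹ * ·) '' (G₁ : Set G)).ncard + S.ncard +
            ((u⁻¹ * ·) '' S).ncard := by
            exact Nat.add_le_add_right (Nat.add_le_add_right (Set.ncard_union_le _ _) _) _
      _ ≤ (G₁ : Set G).ncard + (U : Set G).ncard + ((u⁻¹ * ·) '' (G₁ : Set G)).ncard + S.ncard +
            ((u⁻¹ * ·) '' S).ncard := by
            exact Nat.add_le_add_right (Nat.add_le_add_right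
              (Nat.add_le_add_right (Set.ncard_union_le _ _) _) _) _
    have hinj : Function.Injective (u⁻¹ * ·) := fun a b hab => by simpa using hab
    rw [Set.ncard_image_of_injective _ hinj, Set.ncard_image_of_injective _ hinj] at hb1
    have hS' := hScard
    omega
  have hexv : ∃ v : G, v ∉ B := by
    by_contra hall
    push_neg at hall
    have hsub : (Set.univ : Set G) ⊆ B := fun v _ => hall v
    have hcount := Set.ncard_le_ncard hsub (Set.toFinite _)
    rw [Set.ncard_univ, hcard] at hcount
    omega
  obtain ⟨v, hvB⟩ := hexv
  rw [hBdef] at hvB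
  simp only [Set.mem_union, Set.mem_image, not_or, not_exists, not_and] at hvB
  obtain ⟨⟨⟨⟨hvG₁, hvU⟩, hvIm1⟩, hvS⟩, hvIm2⟩ := hvB
  have hvG₁' : v ∉ G₁ := hvG₁
  have hvU' : v ∉ U := hvU
  have huvG₁ : u * v ∉ G₁ := by
    intro hmem
    exact hvIm1 (u * v) hmem (by group)
  have huvS : (u * v) ∉ S := by
    intro hmem
    exact hvIm2 (u * v) hmem (by group)
  have hvord : orderOf v = p := by
    rcases horders v hvG₁' with h | h
    · exact h
    · exact absurd (⟨hvG₁', h⟩ : v ∈ S) hvS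
  have huvord : orderOf (u * v) = p := by
    rcases horders (u * v) huvG₁ with h | h
    · exact h
    · exact absurd (⟨huvG₁, h⟩ : u * v ∈ S) huvS
  exact ⟨u, v, hu, hvord, huvord, hgen2 v hvU'⟩
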